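/- Let P and Q be two distinct elements of the n-qubit Pauli group, each of the form of a product of Pauli-Z operators on exactly two qubits (weight-two Z-type operators). Suppose that for every qubit q there exists a weight-two X-type Pauli operator g, acting nontrivially on q, that commutes with both P and Q. Then the supports of P and Q are disjoint. -/

import Mathlib

lemma zmod2_mul_eq_ite (a b : ZMod 2) :
    a * b = if a ≠ 0 ∧ b ≠ 0 then 1 else 0 := by
  fin_cases a <;> fin_cases b <;> decide

lemma dot_card (n : ℕ) (gx Pz : Fin n → ZMod 2) :
    ∑ p : Fin n, gx p * Pz p =
      (((Finset.univ.filter fun p : Fin n => gx p ≠ 0) ∩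
        (Finset.univ.filter fun p : Fin n => Pz p ≠ 0)).card : ZMod 2) := by
  have h : ∑ p : Fin n, gx p * Pz p
      = ∑ p : Fin n, if gx p ≠ 0 ∧ Pz p ≠ 0 then (1 : ZMod 2) else 0 :=
    Finset.sum_congr rfl fun p _ => zmod2_mul_eq_ite _ _
  rw [h, Finset.sum_boole, ← Finset.filter_and]

/-- Pauli operators on `n` qubits are represented symplectically: a Z-type
operator corresponds to its vector `z ∈ 𝔽₂ⁿ` of Z-positions, and an X-type
operator to its vector `x ∈ 𝔽₂ⁿ` of X-positions.  An X-type operator commutes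
with a Z-type operator iff the `𝔽₂` dot product of their vectors vanishes.

Let `P` and `Q` be two distinct weight-two Z-type Pauli operators on `n`
qubits.  Suppose that for every qubit `q` there exists a weight-two X-type
Pauli operator acting nontrivially on `q` that commutes with both `P` and `Q`.
Then the supports of `P` and `Q` are disjoint. -/
theorem disjoint_supports_of_two_local_Z_type
    (n : ℕ) (Pz Qz : Fin n → ZMod 2)
    (hPwt : (Finset.univ.filter fun q : Fin n => Pz q ≠ 0).card = 2)
    (hQwt : (Finset.univ.filter fun q : Fin n => Qz q ≠ 0).card = 2)
    (hne : Pz ≠ Qz)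
    (hgauge : ∀ q : Fin n, ∃ gx : Fin n → ZMod 2,
      (Finset.univ.filter fun p : Fin n => gx p ≠ 0).card = 2 ∧
      gx q ≠ 0 ∧
      (∑ p : Fin n, gx p * Pz p = 0) ∧
      (∑ p : Fin n, gx p * Qz p = 0)) :
    Disjoint {q : Fin n | Pz q ≠ 0} {q : Fin n | Qz q ≠ 0} := by
  set SP := Finset.univ.filter fun q : Fin n => Pz q ≠ 0 with hSPdef
  set SQ := Finset.univ.filter fun q : Fin n => Qz q ≠ 0 with hSQdef
  have hone : ∀ x : ZMod 2, x ≠ 0 → x = 1 := by decide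
  -- SP ≠ SQ
  have hSne : SP ≠ SQ := by
    intro hEq
    apply hne
    funext p
    have hiff : Pz p ≠ 0 ↔ Qz p ≠ 0 := by
      constructor <;> intro h
      · have : p ∈ SP := by simp [hSPdef, h]
        rw [hEq] at this; simpa [hSQdef] using this
      · have : p ∈ SQ := by simp [hSQdef, h]
        rw [← hEq] at this; simpa [hSPdef] using this
    by_cases h : Pz p = 0
    · rw [h]; by_contra h'
      exact (hiff.not.mp (by simp [h])) (Ne.symm h')
    · rw [hone _ h, hone _ (hiff.mp h)]
  -- pick r ∈ SP \ SQ
  have hnsub : ¬ SP ⊆ SQ := fun hsub =>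
    hSne (Finset.eq_of_subset_of_card_le hsub (by rw [hPwt, hQwt]))
  obtain ⟨r, hrP, hrQ⟩ := Finset.not_subset.mp hnsub
  rw [Set.disjoint_left]
  intro q hqP hqQ
  simp only [Set.mem_setOf_eq] at hqP hqQ
  obtain ⟨gx, hgcard, hgr, hgP, hgQ⟩ := hgauge r
  set Sg := Finset.univ.filter fun p : Fin n => gx p ≠ 0 with hSgdef
  have hdvdP : 2 ∣ (Sg ∩ SP).card := by
    rw [dot_card] at hgP
    exact (ZMod.natCast_eq_zero_iff _ 2).mp hgP
  have hdvdQ : 2 ∣ (Sg ∩ SQ).card := by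
    rw [dot_card] at hgQ
    exact (ZMod.natCast_eq_zero_iff _ 2).mp hgQ
  have hrSg : r ∈ Sg := by simp [hSgdef, hgr]
  have hcle : (Sg ∩ SP).card ≤ 2 := hgcard ▸ Finset.card_le_card Finset.inter_subset_left
  have hcpos : 0 < (Sg ∩ SP).card :=
    Finset.card_pos.mpr ⟨r, Finset.mem_inter.mpr ⟨hrSg, hrP⟩⟩
  have hc2 : (Sg ∩ SP).card = 2 := by omega
  have hSgP : Sg = SP := by
    have h1 : Sg ∩ SP = Sg :=
      Finset.eq_of_subset_of_card_le Finset.inter_subset_left (by rw [hc2, hgcard])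
    exact Finset.eq_of_subset_of_card_le (h1 ▸ Finset.inter_subset_right)
      (by rw [hPwt, hgcard])
  -- q ∈ Sg ∩ SQ, r ∈ Sg but r ∉ SQ, so 0 < card < 2, contradicting dvd
  have hqSg : q ∈ Sg := by rw [hSgP]; simp [hSPdef, hqP]
  have hQpos : 0 < (Sg ∩ SQ).card :=
    Finset.card_pos.mpr ⟨q, Finset.mem_inter.mpr ⟨hqSg, by simp [hSQdef, hqQ]⟩⟩
  have hQlt : (Sg ∩ SQ).card < 2 := by
    have hss : Sg ∩ SQ ⊆ Sg.erase r := by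
      intro x hx
      rw [Finset.mem_inter] at hx
      refine Finset.mem_erase.mpr ⟨?_, hx.1⟩
      rintro rfl; exact hrQ hx.2
    calc (Sg ∩ SQ).card ≤ (Sg.erase r).card := Finset.card_le_card hss
      _ < Sg.card := Finset.card_erase_lt_of_mem hrSg
      _ = 2 := hgcard
  omega
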